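/- (Domination by optimal strategies.) For every pair (p,q) ∈ P × Q there exist a minimal strategy p̄ ∈ P and a maximal strategy q̄ ∈ Q such that V_I(p̄) ⊆ V_I(p) and V_II(q̄) ⊆ V_II(q). -/

import Mathlib

open Set

noncomputable section

/-- The mixed-strategy simplex in `ℝ^m`. -/
def simplex (m : ℕ) : Set (Fin m → ℝ) := {p | (∀ i, 0 ≤ p i) ∧ ∑ i, p i = 1}

/-- Expected vector payoff `v(p,q) = Σ_i Σ_j p_i g_{ij} q_j`. -/
def payoff {K m n : ℕ} (g : Fin m → Fin n → (Fin K → ℝ)) (p : Fin m → ℝ) (q : Fin n → ℝ) :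
    Fin K → ℝ := ∑ i, ∑ j, (p i * q j) • g i j

/-- `v_I(p) = {v(p,q) : q ∈ Q}`. -/
def vI {K m n : ℕ} (g : Fin m → Fin n → (Fin K → ℝ)) (p : Fin m → ℝ) : Set (Fin K → ℝ) :=
  {y | ∃ q ∈ simplex n, y = payoff g p q}

/-- `V_I(p) = v_I(p) - ℝ^K_+`. -/
def VI {K m n : ℕ} (g : Fin m → Fin n → (Fin K → ℝ)) (p : Fin m → ℝ) : Set (Fin K → ℝ) :=
  {y | ∃ z ∈ vI g p, y ≤ z}

/-- `v_II(q) = {v(p,q) : p ∈ P}`. -/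
def vII {K m n : ℕ} (g : Fin m → Fin n → (Fin K → ℝ)) (q : Fin n → ℝ) : Set (Fin K → ℝ) :=
  {y | ∃ p ∈ simplex m, y = payoff g p q}

/-- `V_II(q) = v_II(q) + ℝ^K_+`. -/
def VII {K m n : ℕ} (g : Fin m → Fin n → (Fin K → ℝ)) (q : Fin n → ℝ) : Set (Fin K → ℝ) :=
  {y | ∃ z ∈ vII g q, z ≤ y}

/-- Maximal points of a set w.r.t. the componentwise order. -/
def maxSet {K : ℕ} (A : Set (Fin K → ℝ)) : Set (Fin K → ℝ) :=
  {z ∈ A | ∀ y ∈ A, z ≤ y → y = z}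

/-- Minimal points of a set w.r.t. the componentwise order. -/
def minSet {K : ℕ} (A : Set (Fin K → ℝ)) : Set (Fin K → ℝ) :=
  {z ∈ A | ∀ y ∈ A, y ≤ z → y = z}

/-- `p̄` is a minimal strategy for player I: no `p ∈ P` with `V_I(p) ⊆ V_I(p̄)`
and `V_I(p) ≠ V_I(p̄)`. -/
def MinimalStrat {K m n : ℕ} (g : Fin m → Fin n → (Fin K → ℝ)) (pbar : Fin m → ℝ) : Prop :=
  ∀ p ∈ simplex m, VI g p ⊆ VI g pbar → VI g p = VI g pbar

/-- `q̄` is a maximal strategy for player II: no `q ∈ Q` with `V_II(q) ⊆ V_II(q̄)`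
and `V_II(q) ≠ V_II(q̄)`. -/
def MaximalStrat {K m n : ℕ} (g : Fin m → Fin n → (Fin K → ℝ)) (qbar : Fin n → ℝ) : Prop :=
  ∀ q ∈ simplex n, VII g q ⊆ VII g qbar → VII g q = VII g qbar

open Pointwise

namespace Stmt3Aux

variable {K m n : ℕ}

lemma simplex_eq : simplex n = stdSimplex ℝ (Fin n) := rfl

/-- The `j`-th column payoff vector. -/
def col (g : Fin m → Fin n → (Fin K → ℝ)) (p : Fin m → ℝ) (j : Fin n) : Fin K → ℝ :=
  ∑ i, p i • g i j

lemma payoff_eq (g : Fin m → Fin n → (Fin K → ℝ)) (p : Fin m → ℝ) (q : Fin n → ℝ) :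
    payoff g p q = ∑ j, q j • col g p j := by
  unfold payoff col
  rw [Finset.sum_comm]
  refine Finset.sum_congr rfl fun j _ => ?_
  rw [Finset.smul_sum]
  refine Finset.sum_congr rfl fun i _ => ?_
  rw [smul_smul, mul_comm]

def delta (j : Fin n) : Fin n → ℝ := fun j' => if j' = j then 1 else 0

lemma delta_mem (j : Fin n) : delta j ∈ simplex n := by
  constructor
  · intro j'; unfold delta; split <;> norm_num
  · simp [delta]

lemma payoff_delta (g : Fin m → Fin n → (Fin K → ℝ)) (p : Fin m → ℝ) (j : Fin n) :
    payoff g p (delta j) = col g p j := by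
  rw [payoff_eq]
  simp [delta, ite_smul]

lemma mem_VI {g : Fin m → Fin n → (Fin K → ℝ)} {p : Fin m → ℝ} {y : Fin K → ℝ} :
    y ∈ VI g p ↔ ∃ q ∈ simplex n, y ≤ payoff g p q := by
  constructor
  · rintro ⟨z, ⟨q, hq, rfl⟩, hy⟩; exact ⟨q, hq, hy⟩
  · rintro ⟨q, hq, hy⟩; exact ⟨_, ⟨q, hq, rfl⟩, hy⟩

lemma VI_down {g : Fin m → Fin n → (Fin K → ℝ)} {p : Fin m → ℝ} {y y' : Fin K → ℝ}
    (h : y' ≤ y) (hy : y ∈ VI g p) : y' ∈ VI g p := by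
  obtain ⟨z, hz, hyz⟩ := hy; exact ⟨z, hz, h.trans hyz⟩

lemma col_mem_VI (g : Fin m → Fin n → (Fin K → ℝ)) (p : Fin m → ℝ) (j : Fin n) :
    col g p j ∈ VI g p :=
  mem_VI.2 ⟨delta j, delta_mem j, (payoff_delta g p j).ge⟩

def dotp (lam y : Fin K → ℝ) : ℝ := ∑ k, lam k * y k

lemma dotp_mono {lam y z : Fin K → ℝ} (hl : 0 ≤ lam) (h : y ≤ z) :
    dotp lam y ≤ dotp lam z :=
  Finset.sum_le_sum fun k _ => mul_le_mul_of_nonneg_left (h k) (hl k)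

lemma dotp_sum_smul {ι : Type*} (s : Finset ι) (lam : Fin K → ℝ) (c : ι → ℝ) (x : ι → Fin K → ℝ) :
    dotp lam (∑ j ∈ s, c j • x j) = ∑ j ∈ s, c j * dotp lam (x j) := by
  unfold dotp
  simp only [Finset.sum_apply, Pi.smul_apply, smul_eq_mul, Finset.mul_sum]
  rw [Finset.sum_comm]
  refine Finset.sum_congr rfl fun j _ => ?_
  refine Finset.sum_congr rfl fun k _ => ?_
  ring

lemma dotp_smul_left (t : ℝ) (lam y : Fin K → ℝ) : dotp (t • lam) y = t * dotp lam y := by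
  unfold dotp
  rw [Finset.mul_sum]
  refine Finset.sum_congr rfl fun k _ => ?_
  simp [mul_assoc]


section H
variable [NeZero n]

def H (g : Fin m → Fin n → (Fin K → ℝ)) (p : Fin m → ℝ) (lam : Fin K → ℝ) : ℝ :=
  Finset.univ.sup' Finset.univ_nonempty fun j => dotp lam (col g p j)

lemma dotp_col_le_H (g : Fin m → Fin n → (Fin K → ℝ)) (p : Fin m → ℝ) (lam : Fin K → ℝ)
    (j : Fin n) : dotp lam (col g p j) ≤ H g p lam :=
  Finset.le_sup' (fun j => dotp lam (col g p j)) (Finset.mem_univ j)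

lemma H_le {g : Fin m → Fin n → (Fin K → ℝ)} {p : Fin m → ℝ} {lam : Fin K → ℝ} {a : ℝ}
    (h : ∀ j, dotp lam (col g p j) ≤ a) : H g p lam ≤ a :=
  Finset.sup'_le _ _ fun j _ => h j

lemma dotp_payoff_le_H {g : Fin m → Fin n → (Fin K → ℝ)} {p : Fin m → ℝ} {lam : Fin K → ℝ}
    {q : Fin n → ℝ} (hq : q ∈ simplex n) : dotp lam (payoff g p q) ≤ H g p lam := by
  rw [payoff_eq, dotp_sum_smul]
  calc ∑ j, q j * dotp lam (col g p j) ≤ ∑ j, q j * H g p lam :=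
        Finset.sum_le_sum fun j _ =>
          mul_le_mul_of_nonneg_left (dotp_col_le_H g p lam j) (hq.1 j)
    _ = H g p lam := by rw [← Finset.sum_mul, hq.2, one_mul]

lemma mem_VI_dotp_le {g : Fin m → Fin n → (Fin K → ℝ)} {p : Fin m → ℝ} {lam y : Fin K → ℝ}
    (hy : y ∈ VI g p) (hl : 0 ≤ lam) : dotp lam y ≤ H g p lam := by
  obtain ⟨q, hq, hyq⟩ := mem_VI.1 hy
  exact (dotp_mono hl hyq).trans (dotp_payoff_le_H hq)

lemma H_smul {t : ℝ} (ht : 0 ≤ t) (g : Fin m → Fin n → (Fin K → ℝ)) (p : Fin m → ℝ)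
    (lam : Fin K → ℝ) : H g p (t • lam) = t * H g p lam := by
  unfold H
  rw [show (t * Finset.univ.sup' Finset.univ_nonempty fun j => dotp lam (col g p j)) =
      Finset.univ.sup' Finset.univ_nonempty ((fun x => t * x) ∘ fun j => dotp lam (col g p j))
    from Finset.comp_sup'_eq_sup'_comp Finset.univ_nonempty (fun x => t * x)
      (fun x y => mul_max_of_nonneg x y ht)]
  refine Finset.sup'_congr _ rfl fun j _ => ?_
  exact dotp_smul_left t lam _

end H

lemma continuous_sup'_aux {α : Type*} [TopologicalSpace α] {ι : Type*} (s : Finset ι)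
    (hs : s.Nonempty) (f : ι → α → ℝ) (hf : ∀ i, Continuous (f i)) :
    Continuous fun x => s.sup' hs fun i => f i x := by
  induction hs using Finset.Nonempty.cons_induction with
  | singleton a => simp only [Finset.sup'_singleton]; exact hf a
  | cons a s ha hs ih =>
      exact Continuous.congr ((hf a).sup ih) fun x => (Finset.sup'_cons hs (fun i => f i x)).symm

lemma continuous_dotp_col (g : Fin m → Fin n → (Fin K → ℝ)) (lam : Fin K → ℝ) (j : Fin n) :
    Continuous fun p' : Fin m → ℝ => dotp lam (col g p' j) := by
  have : (fun p' : Fin m → ℝ => dotp lam (col g p' j)) =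
      fun p' => ∑ k, lam k * ∑ i, p' i * g i j k := by
    funext p'
    unfold dotp col
    simp [Finset.sum_apply]
  rw [this]
  exact continuous_finset_sum _ fun k _ =>
    continuous_const.mul (continuous_finset_sum _ fun i _ =>
      (continuous_apply i).mul continuous_const)

lemma continuous_dotp_lam (c : Fin K → ℝ) : Continuous fun lam : Fin K → ℝ => dotp lam c :=
  continuous_finset_sum _ fun k _ => (continuous_apply k).mul continuous_const

section H2
variable [NeZero n]

lemma continuous_H_p (g : Fin m → Fin n → (Fin K → ℝ)) (lam : Fin K → ℝ) :
    Continuous fun p' : Fin m → ℝ => H g p' lam :=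
  continuous_sup'_aux _ _ _ fun j => continuous_dotp_col g lam j

lemma continuous_H_lam (g : Fin m → Fin n → (Fin K → ℝ)) (p : Fin m → ℝ) :
    Continuous fun lam : Fin K → ℝ => H g p lam :=
  continuous_sup'_aux _ _ _ fun j => continuous_dotp_lam (col g p j)

end H2

lemma continuous_payoff (g : Fin m → Fin n → (Fin K → ℝ)) (p : Fin m → ℝ) :
    Continuous fun q : Fin n → ℝ => payoff g p q :=
  continuous_finset_sum _ fun i _ => continuous_finset_sum _ fun j _ =>
    (continuous_const.mul (continuous_apply j)).smul continuous_const

lemma VI_eq_add (g : Fin m → Fin n → (Fin K → ℝ)) (p : Fin m → ℝ) :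
    VI g p = (payoff g p '' simplex n) + Iic (0 : Fin K → ℝ) := by
  ext y
  rw [mem_VI, Set.mem_add]
  constructor
  · rintro ⟨q, hq, hy⟩
    exact ⟨payoff g p q, ⟨q, hq, rfl⟩, y - payoff g p q, sub_nonpos.2 hy, by abel⟩
  · rintro ⟨x, ⟨q, hq, rfl⟩, b, hb, rfl⟩
    exact ⟨q, hq, by calc payoff g p q + b ≤ payoff g p q + 0 := add_le_add (le_refl _) hb
      _ = payoff g p q := add_zero _⟩

lemma VI_isClosed (g : Fin m → Fin n → (Fin K → ℝ)) (p : Fin m → ℝ) : IsClosed (VI g p) := by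
  rw [VI_eq_add]
  exact IsClosed.add_left_of_isCompact isClosed_Iic
    ((isCompact_stdSimplex ℝ (Fin n)).image (continuous_payoff g p))

lemma VI_convex (g : Fin m → Fin n → (Fin K → ℝ)) (p : Fin m → ℝ) : Convex ℝ (VI g p) := by
  rw [VI_eq_add]
  have hL : ∃ L : (Fin n → ℝ) →ₗ[ℝ] (Fin K → ℝ), ∀ q, L q = payoff g p q := by
    refine ⟨{ toFun := fun q => ∑ j, q j • col g p j
              map_add' := ?_
              map_smul' := ?_ }, fun q => (payoff_eq g p q).symm⟩
    · intro x y; simp [add_smul, Finset.sum_add_distrib]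
    · intro c x; simp [smul_smul, Finset.smul_sum]
  obtain ⟨L, hLq⟩ := hL
  have himg : payoff g p '' simplex n = L '' simplex n :=
    Set.image_congr fun q _ => (hLq q).symm
  rw [himg]
  exact ((convex_stdSimplex ℝ (Fin n)).linear_image L).add (convex_Iic 0)


section Sep
variable [NeZero n]

lemma sep (g : Fin m → Fin n → (Fin K → ℝ)) (p : Fin m → ℝ) {c : Fin K → ℝ}
    (hc : c ∉ VI g p) : ∃ lam : Fin K → ℝ, 0 ≤ lam ∧ H g p lam < dotp lam c := by
  obtain ⟨f, u, hfu, huc⟩ :=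
    geometric_hahn_banach_closed_point (VI_convex g p) (VI_isClosed g p) hc
  set lam : Fin K → ℝ := fun k => f (Pi.single k 1) with hlam
  have hfy : ∀ y : Fin K → ℝ, f y = dotp lam y := by
    intro y
    have hy : y = ∑ k, y k • (Pi.single k (1 : ℝ) : Fin K → ℝ) := by
      conv_lhs => rw [← Finset.univ_sum_single y]
      refine Finset.sum_congr rfl fun k _ => ?_
      rw [← Pi.single_smul, smul_eq_mul, mul_one]
    calc f y = f (∑ k, y k • (Pi.single k (1 : ℝ) : Fin K → ℝ)) := by rw [← hy]
      _ = ∑ k, y k • f (Pi.single k (1 : ℝ)) := by rw [map_sum]; simp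
      _ = dotp lam y := by unfold dotp; refine Finset.sum_congr rfl fun k _ => ?_
                           simp [hlam, mul_comm]
  have j0 : Fin n := ⟨0, Nat.pos_of_ne_zero (NeZero.ne n)⟩
  have hz0 : col g p j0 ∈ VI g p := col_mem_VI g p j0
  have hnn : 0 ≤ lam := by
    intro k
    simp only [Pi.zero_apply]
    by_contra hk
    push_neg at hk
    set e : Fin K → ℝ := Pi.single k 1 with he
    set t : ℝ := (u - f (col g p j0) + 1) / (-lam k) with ht
    have hfz : f (col g p j0) < u := hfu _ hz0
    have htpos : 0 < t := div_pos (by linarith) (by linarith)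
    have hmem : col g p j0 - t • e ∈ VI g p := by
      refine VI_down ?_ hz0
      intro k'
      simp only [Pi.sub_apply, Pi.smul_apply, smul_eq_mul]
      have h0 : 0 ≤ t * e k' := by
        rcases eq_or_ne k' k with rfl | hne
        · simp [he, le_of_lt htpos]
        · simp [he, Pi.single_apply, hne]
      linarith
    have h2 : f (col g p j0) - t * f e < u := by
      have := hfu _ hmem
      rwa [map_sub, map_smul, smul_eq_mul] at this
    have hfe : f e = lam k := rfl
    rw [hfe] at h2
    have ht2 : t * (-lam k) = u - f (col g p j0) + 1 :=
      div_mul_cancel₀ _ (ne_of_gt (neg_pos.2 hk))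
    have ht3 : t * lam k = -(u - f (col g p j0) + 1) := by linear_combination -ht2
    linarith
  refine ⟨lam, hnn, ?_⟩
  have hH : H g p lam < u := by
    have := Finset.exists_mem_eq_sup' (Finset.univ_nonempty (α := Fin n))
      (fun j => dotp lam (col g p j))
    obtain ⟨j, _, hj⟩ := this
    rw [show H g p lam = dotp lam (col g p j) from hj]
    rw [← hfy]
    exact hfu _ (col_mem_VI g p j)
  rw [← hfy]
  exact hH.trans huc

lemma subset_iff (g : Fin m → Fin n → (Fin K → ℝ)) (p' p : Fin m → ℝ) :
    VI g p' ⊆ VI g p ↔ ∀ lam : Fin K → ℝ, 0 ≤ lam → H g p' lam ≤ H g p lam := by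
  constructor
  · intro h lam hlam
    exact H_le fun j => mem_VI_dotp_le (h (col_mem_VI g p' j)) hlam
  · intro h y hy
    have hcol : ∀ j, col g p' j ∈ VI g p := by
      intro j
      by_contra hcn
      obtain ⟨lam, hlam, hH⟩ := sep g p hcn
      exact absurd ((dotp_col_le_H g p' lam j).trans (h lam hlam)) (not_le.2 hH)
    choose Q hQmem hQle using fun j => mem_VI.1 (hcol j)
    obtain ⟨q, hq, hyq⟩ := mem_VI.1 hy
    refine mem_VI.2 ⟨fun j' => ∑ j, q j * Q j j', ⟨?_, ?_⟩, ?_⟩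
    · intro j'
      exact Finset.sum_nonneg fun j _ => mul_nonneg (hq.1 j) ((hQmem j).1 j')
    · rw [Finset.sum_comm]
      calc (∑ j, ∑ j', q j * Q j j') = ∑ j, q j * ∑ j', Q j j' := by
            refine Finset.sum_congr rfl fun j _ => ?_; rw [Finset.mul_sum]
        _ = ∑ j, q j := by
            refine Finset.sum_congr rfl fun j _ => ?_; rw [(hQmem j).2, mul_one]
        _ = 1 := hq.2
    · refine hyq.trans ?_
      rw [payoff_eq g p', payoff_eq g p]
      have hmix : (∑ j', (∑ j, q j * Q j j') • col g p j') =
          ∑ j, q j • payoff g p (Q j) := by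
        calc (∑ j', (∑ j, q j * Q j j') • col g p j')
            = ∑ j', ∑ j, (q j * Q j j') • col g p j' := by
              refine Finset.sum_congr rfl fun j' _ => ?_; rw [Finset.sum_smul]
          _ = ∑ j, ∑ j', q j • (Q j j' • col g p j') := by
              rw [Finset.sum_comm]
              exact Finset.sum_congr rfl fun j _ => Finset.sum_congr rfl fun j' _ =>
                (mul_smul (q j) (Q j j') (col g p j'))
          _ = ∑ j, q j • payoff g p (Q j) := by
              refine Finset.sum_congr rfl fun j _ => ?_
              rw [← Finset.smul_sum, ← payoff_eq]
      rw [hmix]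
      intro k
      simp only [Finset.sum_apply, Pi.smul_apply, smul_eq_mul]
      exact Finset.sum_le_sum fun j _ =>
        mul_le_mul_of_nonneg_left (hQle j k) (hq.1 j)

end Sep

/-- The unit cube of directions. -/
def Cube (K : ℕ) : Set (Fin K → ℝ) := Icc 0 1

lemma cube_nonneg {lam : Fin K → ℝ} (h : lam ∈ Cube K) : 0 ≤ lam := h.1

section CubeChar
variable [NeZero n]

lemma subset_iff_cube (g : Fin m → Fin n → (Fin K → ℝ)) (p' p : Fin m → ℝ) :
    VI g p' ⊆ VI g p ↔ ∀ lam ∈ Cube K, H g p' lam ≤ H g p lam := by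
  rw [subset_iff]
  constructor
  · intro h lam hlam; exact h lam hlam.1
  · intro h lam hlam
    set t : ℝ := (∑ k, lam k) + 1 with ht
    have htpos : 0 < t := by
      have : 0 ≤ ∑ k, lam k := Finset.sum_nonneg fun k _ => hlam k
      linarith
    have hmu : t⁻¹ • lam ∈ Cube K := by
      constructor
      · intro k
        simp only [Pi.smul_apply, smul_eq_mul, Pi.zero_apply]
        exact mul_nonneg (inv_nonneg.2 htpos.le) (hlam k)
      · intro k
        simp only [Pi.smul_apply, smul_eq_mul, Pi.one_apply]
        rw [inv_mul_le_iff₀ htpos, mul_one]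
        have h1 : lam k ≤ ∑ k', lam k' :=
          Finset.single_le_sum (fun k' _ => hlam k') (Finset.mem_univ k)
        linarith
    have hrest : lam = t • (t⁻¹ • lam) := (smul_inv_smul₀ htpos.ne' lam).symm
    calc H g p' lam = t * H g p' (t⁻¹ • lam) := by rw [hrest, H_smul htpos.le]; rw [← hrest]
      _ ≤ t * H g p (t⁻¹ • lam) := by
          exact mul_le_mul_of_nonneg_left (h _ hmu) htpos.le
      _ = H g p lam := by rw [← H_smul htpos.le, ← hrest]

end CubeChar

lemma key {K m n : ℕ} (hn : 0 < n) (g : Fin m → Fin n → (Fin K → ℝ)) (p : Fin m → ℝ)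
    (hp : p ∈ simplex m) :
    ∃ pbar ∈ simplex m, (∀ p' ∈ simplex m, VI g p' ⊆ VI g pbar → VI g p' = VI g pbar) ∧
      VI g pbar ⊆ VI g p := by
  haveI : NeZero n := ⟨hn.ne'⟩
  set B : ℝ := ∑ k, ∑ i, ∑ j, |g i j k| with hB
  have hB0 : 0 ≤ B :=
    Finset.sum_nonneg fun k _ => Finset.sum_nonneg fun i _ =>
      Finset.sum_nonneg fun j _ => abs_nonneg _
  set M : ℝ := B + 1 with hM
  have hM0 : 0 < M := by linarith
  have hdotb : ∀ p' ∈ simplex m, ∀ lam ∈ Cube K, ∀ j, |dotp lam (col g p' j)| ≤ B := by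
    intro p' hp' lam hlam j
    calc |dotp lam (col g p' j)| ≤ ∑ k, |lam k * col g p' j k| :=
          Finset.abs_sum_le_sum_abs _ _
      _ ≤ ∑ k, ∑ i, ∑ j', |g i j' k| := by
          refine Finset.sum_le_sum fun k _ => ?_
          rw [abs_mul]
          have h1 : |lam k| ≤ 1 := by
            rw [abs_le]
            exact ⟨by have := hlam.1 k; simp only [Pi.zero_apply] at this; linarith,
              by have := hlam.2 k; simpa using this⟩
          have h2 : |col g p' j k| ≤ ∑ i, ∑ j', |g i j' k| := by
            have hc : col g p' j k = ∑ i, p' i * g i j k := by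
              simp [col, Finset.sum_apply]
            rw [hc]
            calc |∑ i, p' i * g i j k| ≤ ∑ i, |p' i * g i j k| :=
                  Finset.abs_sum_le_sum_abs _ _
              _ ≤ ∑ i, |g i j k| := by
                  refine Finset.sum_le_sum fun i _ => ?_
                  rw [abs_mul, abs_of_nonneg (hp'.1 i)]
                  have hpi : p' i ≤ 1 := by
                    have := Finset.single_le_sum (fun i' _ => hp'.1 i') (Finset.mem_univ i)
                    rw [hp'.2] at this; exact this
                  nlinarith [abs_nonneg (g i j k)]
              _ ≤ ∑ i, ∑ j', |g i j' k| := by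
                  refine Finset.sum_le_sum fun i _ => ?_
                  exact Finset.single_le_sum (f := fun j' => |g i j' k|)
                    (fun j' _ => abs_nonneg _) (Finset.mem_univ j)
          calc |lam k| * |col g p' j k| ≤ 1 * (∑ i, ∑ j', |g i j' k|) :=
                mul_le_mul h1 h2 (abs_nonneg _) zero_le_one
            _ = ∑ i, ∑ j', |g i j' k| := one_mul _
      _ = B := rfl
  have hbound : ∀ p' ∈ simplex m, ∀ lam ∈ Cube K, |H g p' lam| ≤ M := by
    intro p' hp' lam hlam
    have j0 : Fin n := ⟨0, hn⟩
    have hup : H g p' lam ≤ B := H_le fun j => (le_abs_self _).trans (hdotb p' hp' lam hlam j)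
    have hlow : -B ≤ H g p' lam := by
      have h1 := hdotb p' hp' lam hlam j0
      rw [abs_le] at h1
      exact h1.1.trans (dotp_col_le_H g p' lam j0)
    rw [abs_le]; constructor <;> [linarith; linarith]
  haveI : Nonempty ↥(Cube K) := ⟨⟨0, ⟨le_refl 0, zero_le_one⟩⟩⟩
  set u : ℕ → ↥(Cube K) := TopologicalSpace.denseSeq ↥(Cube K) with husdef
  have hu : DenseRange u := TopologicalSpace.denseRange_denseSeq _
  set Φ : (Fin m → ℝ) → ℝ :=
    fun p' => ∑' i : ℕ, (1/2 : ℝ)^i * max (-M) (min M (H g p' ↑(u i))) with hΦ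
  have hclampabs : ∀ z : ℝ, |max (-M) (min M z)| ≤ M := by
    intro z
    rw [abs_le]
    exact ⟨le_max_left _ _, max_le (by linarith) (min_le_left _ _)⟩
  have hbnd : ∀ (i : ℕ) (x : Fin m → ℝ),
      ‖(1/2 : ℝ)^i * max (-M) (min M (H g x ↑(u i)))‖ ≤ (1/2 : ℝ)^i * M := by
    intro i x
    rw [Real.norm_eq_abs, abs_mul, abs_pow, abs_of_nonneg (by norm_num : (0:ℝ) ≤ 1/2)]
    exact mul_le_mul_of_nonneg_left (hclampabs _) (pow_nonneg (by norm_num) i)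
  have hsummaj : Summable fun i : ℕ => (1/2 : ℝ)^i * M := summable_geometric_two.mul_right M
  have hsum : ∀ p' : Fin m → ℝ,
      Summable fun i : ℕ => (1/2 : ℝ)^i * max (-M) (min M (H g p' ↑(u i))) := by
    intro p'
    exact Summable.of_norm_bounded hsummaj fun i => hbnd i p'
  have hΦcont : Continuous Φ := by
    refine continuous_tsum (fun i => ?_) hsummaj hbnd
    exact continuous_const.mul
      (continuous_const.max (continuous_const.min (continuous_H_p g _)))
  set T : Set (Fin m → ℝ) := {p' | ∀ lam ∈ Cube K, H g p' lam ≤ H g p lam} with hT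
  have hTclosed : IsClosed T := by
    have hTeq : T = ⋂ lam ∈ Cube K, {p' | H g p' lam ≤ H g p lam} := by
      ext p'; simp [hT, Set.mem_iInter₂]
    rw [hTeq]
    exact isClosed_biInter fun lam _ => isClosed_le (continuous_H_p g lam) continuous_const
  have hSccomp : IsCompact (simplex m ∩ T) :=
    (isCompact_stdSimplex ℝ (Fin m)).inter_right hTclosed
  have hScne : (simplex m ∩ T).Nonempty := ⟨p, hp, fun lam _ => le_refl _⟩
  obtain ⟨pbar, hpbarmem, hmin⟩ := hSccomp.exists_isMinOn hScne hΦcont.continuousOn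
  refine ⟨pbar, hpbarmem.1, ?_, (subset_iff_cube g pbar p).2 hpbarmem.2⟩
  intro p'' hp''s hsub
  have h1 : ∀ lam : Fin K → ℝ, 0 ≤ lam → H g p'' lam ≤ H g pbar lam :=
    (subset_iff g p'' pbar).1 hsub
  have hp''Sc : p'' ∈ simplex m ∩ T :=
    ⟨hp''s, fun lam hlam => (h1 lam hlam.1).trans (hpbarmem.2 lam hlam)⟩
  have hΦ1 : Φ pbar ≤ Φ p'' := (isMinOn_iff.mp hmin) p'' hp''Sc
  have hcl : ∀ p' ∈ simplex m, ∀ lam ∈ Cube K,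
      max (-M) (min M (H g p' lam)) = H g p' lam := by
    intro p' hp' lam hlam
    have h0 := hbound p' hp' lam hlam
    rw [abs_le] at h0
    rw [min_eq_right h0.2, max_eq_right h0.1]
  have hterm : ∀ i, H g p'' ↑(u i) = H g pbar ↑(u i) := by
    by_contra hne
    push_neg at hne
    obtain ⟨i, hi⟩ := hne
    have hlt : H g p'' ↑(u i) < H g pbar ↑(u i) :=
      lt_of_le_of_ne (h1 _ (cube_nonneg (u i).2)) hi
    have hΦlt : Φ p'' < Φ pbar := by
      refine Summable.tsum_lt_tsum (i := i) (fun i' => ?_) ?_ (hsum p'') (hsum pbar)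
      · refine mul_le_mul_of_nonneg_left ?_ (pow_nonneg (by norm_num) i')
        exact max_le_max (le_refl _)
          (min_le_min (le_refl _) (h1 _ (cube_nonneg (u i').2)))
      · refine mul_lt_mul_of_pos_left ?_ (pow_pos (by norm_num) i)
        rw [hcl p'' hp''s _ (u i).2, hcl pbar hpbarmem.1 _ (u i).2]
        exact hlt
    exact absurd hΦ1 (not_le.2 hΦlt)
  have hcube : ∀ lam ∈ Cube K, H g p'' lam = H g pbar lam := by
    have hfg : (fun x : ↥(Cube K) => H g p'' ↑x) = fun x : ↥(Cube K) => H g pbar ↑x := by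
      refine Continuous.ext_on hu ?_ ?_ ?_
      · exact (continuous_H_lam g p'').comp continuous_subtype_val
      · exact (continuous_H_lam g pbar).comp continuous_subtype_val
      · rintro x ⟨i, rfl⟩; exact hterm i
    intro lam hlam
    exact congrFun hfg ⟨lam, hlam⟩
  exact Set.Subset.antisymm hsub
    ((subset_iff_cube g pbar p'').2 fun lam hlam => (hcube lam hlam).ge)


/-- Transposed/negated game. -/
def gT (g : Fin m → Fin n → (Fin K → ℝ)) : Fin n → Fin m → (Fin K → ℝ) := fun j i => -g i j

lemma payoff_gT (g : Fin m → Fin n → (Fin K → ℝ)) (p : Fin m → ℝ) (q : Fin n → ℝ) :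
    payoff (gT g) q p = -payoff g p q := by
  unfold payoff gT
  rw [Finset.sum_comm, ← Finset.sum_neg_distrib]
  refine Finset.sum_congr rfl fun i _ => ?_
  rw [← Finset.sum_neg_distrib]
  refine Finset.sum_congr rfl fun j _ => ?_
  rw [smul_neg, mul_comm]

lemma mem_VI_gT {g : Fin m → Fin n → (Fin K → ℝ)} {q : Fin n → ℝ} {y : Fin K → ℝ} :
    y ∈ VI (gT g) q ↔ -y ∈ VII g q := by
  rw [mem_VI]
  constructor
  · rintro ⟨p', hp', hy⟩
    refine ⟨payoff g p' q, ⟨p', hp', rfl⟩, ?_⟩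
    rw [payoff_gT] at hy
    exact le_neg_of_le_neg hy
  · rintro ⟨z, ⟨p', hp', rfl⟩, hz⟩
    refine ⟨p', hp', ?_⟩
    rw [payoff_gT]
    exact le_neg_of_le_neg hz

lemma VII_subset_iff {g : Fin m → Fin n → (Fin K → ℝ)} {a b : Fin n → ℝ} :
    VII g a ⊆ VII g b ↔ VI (gT g) a ⊆ VI (gT g) b := by
  constructor
  · intro h y hy
    exact mem_VI_gT.2 (h (mem_VI_gT.1 hy))
  · intro h y hy
    have h1 : -y ∈ VI (gT g) a := mem_VI_gT.2 (by simpa using hy)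
    have h2 := mem_VI_gT.1 (h h1)
    simpa using h2

lemma VII_eq_iff {g : Fin m → Fin n → (Fin K → ℝ)} {a b : Fin n → ℝ} :
    VII g a = VII g b ↔ VI (gT g) a = VI (gT g) b := by
  rw [Set.Subset.antisymm_iff, Set.Subset.antisymm_iff, VII_subset_iff, VII_subset_iff]

end Stmt3Aux

open Stmt3Aux in
theorem stmt3 {K m n : ℕ} (hK : 0 < K) (hm : 0 < m) (hn : 0 < n)
    (g : Fin m → Fin n → (Fin K → ℝ)) (p : Fin m → ℝ) (q : Fin n → ℝ)
    (hp : p ∈ simplex m) (hq : q ∈ simplex n) :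
    ∃ pbar ∈ simplex m, ∃ qbar ∈ simplex n,
      MinimalStrat g pbar ∧ MaximalStrat g qbar ∧
      VI g pbar ⊆ VI g p ∧ VII g qbar ⊆ VII g q := by
  obtain ⟨pbar, hpbar, hminP, hsubP⟩ := key hn g p hp
  obtain ⟨qbar, hqbar, hminQ, hsubQ⟩ := key hm (gT g) q hq
  refine ⟨pbar, hpbar, qbar, hqbar, hminP, ?_, hsubP, VII_subset_iff.2 hsubQ⟩
  intro q' hq' hsub
  exact VII_eq_iff.2 (hminQ q' hq' (VII_subset_iff.1 hsub))
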